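/- For a point (a,b) ∈ ℝ², its inverse stereographic projection σ(a,b) lies on the plane {x sin φ − z cos φ = 0} if and only if (a − tan φ)² + b² = sec² φ, provided cos φ ≠ 0. Hence the stereographic projection of the rotated equator R^y_φ(C) is the circle of center (tan φ, 0) and radius |sec φ|. -/

import Mathlib

/-- Stereographic projection from the unit sphere in ℝ³ (minus the north pole) to ℝ². -/
noncomputable def stereo (p : ℝ × ℝ × ℝ) : ℝ × ℝ :=
  (p.1 / (1 - p.2.2), p.2.1 / (1 - p.2.2))

/-- Inverse stereographic projection. -/
noncomputable def invStereo (q : ℝ × ℝ) : ℝ × ℝ × ℝ :=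
  (2 * q.1 / (q.1 ^ 2 + q.2 ^ 2 + 1), 2 * q.2 / (q.1 ^ 2 + q.2 ^ 2 + 1),
    (q.1 ^ 2 + q.2 ^ 2 - 1) / (q.1 ^ 2 + q.2 ^ 2 + 1))

/-- Rotation of ℝ³ about the y-axis by angle φ. -/
noncomputable def rotY (φ : ℝ) (p : ℝ × ℝ × ℝ) : ℝ × ℝ × ℝ :=
  (p.1 * Real.cos φ - p.2.2 * Real.sin φ, p.2.1, p.1 * Real.sin φ + p.2.2 * Real.cos φ)

/-- The equator circle of S². -/
noncomputable def equator : Set (ℝ × ℝ × ℝ) := {p | p.1 ^ 2 + p.2.1 ^ 2 = 1 ∧ p.2.2 = 0}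

/-- σ(a,b) lies on the plane {x sin φ − z cos φ = 0} iff (a − tan φ)² + b² = sec² φ
    (for cos φ ≠ 0); hence the stereographic projection of the rotated equator
    R^y_φ(C) is the circle with center (tan φ, 0) and radius |sec φ|. -/
theorem stereo_rotated_equator (φ : ℝ) (hφ : Real.cos φ ≠ 0) :
    (∀ a b : ℝ,
      (invStereo (a, b)).1 * Real.sin φ - (invStereo (a, b)).2.2 * Real.cos φ = 0 ↔
        (a - Real.tan φ) ^ 2 + b ^ 2 = (1 / Real.cos φ) ^ 2) ∧
    stereo '' (rotY φ '' equator) =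
      {q : ℝ × ℝ | (q.1 - Real.tan φ) ^ 2 + q.2 ^ 2 = (1 / Real.cos φ) ^ 2} := by
  have pyth := Real.sin_sq_add_cos_sq φ
  have key : ∀ a b : ℝ,
      ((invStereo (a, b)).1 * Real.sin φ - (invStereo (a, b)).2.2 * Real.cos φ = 0 ↔
        (a - Real.tan φ) ^ 2 + b ^ 2 = (1 / Real.cos φ) ^ 2) := by
    intro a b
    have hr : a ^ 2 + b ^ 2 + 1 ≠ 0 := by positivity
    simp only [invStereo, Real.tan_eq_sin_div_cos]
    constructor <;> intro h
    · field_simp at h ⊢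
      linear_combination (-(Real.cos φ)) * h + pyth
    · field_simp at h ⊢
      have h2 : Real.cos φ * (2 * a * Real.sin φ - (a ^ 2 + b ^ 2 - 1) * Real.cos φ)
          = Real.cos φ * 0 := by linear_combination pyth - h
      have h3 := mul_left_cancel₀ hφ h2
      linarith [h3]
  refine ⟨key, ?_⟩
  ext ⟨u, v⟩
  constructor
  · rintro ⟨p, ⟨⟨x, y, z⟩, ⟨hp1, hp2⟩, rfl⟩, heq⟩
    simp only at hp1 hp2
    subst hp2
    rw [← heq]
    simp only [Set.mem_setOf_eq, rotY, stereo, Real.tan_eq_sin_div_cos]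
    have hd : 1 - x * Real.sin φ ≠ 0 := by
      intro h
      have hc2 : Real.cos φ ^ 2 = 0 := by nlinarith [sq_nonneg y, sq_nonneg (x * Real.cos φ)]
      exact hφ (pow_eq_zero_iff (n := 2) (by norm_num) |>.mp hc2)
    field_simp
    have hin : (x * Real.cos φ * Real.cos φ - (1 - x * Real.sin φ) * Real.sin φ) ^ 2
        + y ^ 2 * Real.cos φ ^ 2 = (1 - x * Real.sin φ) ^ 2 := by
      linear_combination Real.cos φ ^ 2 * hp1
        + (1 - x ^ 2 + x ^ 2 * (1 + Real.sin φ ^ 2 + Real.cos φ ^ 2) - 2 * x * Real.sin φ) * pyth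
    simp only [zero_mul, mul_zero, add_zero, sub_zero]
    rw [div_sub' hd, div_pow, ← add_div, div_eq_one_iff_eq (pow_ne_zero 2 hd)]
    linear_combination hin
  · intro hq
    simp only [Set.mem_setOf_eq] at hq
    have hplane := (key u v).mpr hq
    set p := invStereo (u, v) with hp
    have hr : u ^ 2 + v ^ 2 + 1 ≠ 0 := by positivity
    have hsph : p.1 ^ 2 + p.2.1 ^ 2 + p.2.2 ^ 2 = 1 := by
      simp only [hp, invStereo]; field_simp; ring
    refine ⟨p, ⟨rotY (-φ) p, ⟨?_, ?_⟩, ?_⟩, ?_⟩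
    · show (p.1 * Real.cos (-φ) - p.2.2 * Real.sin (-φ)) ^ 2 + p.2.1 ^ 2 = 1
      rw [Real.cos_neg, Real.sin_neg]
      linear_combination hsph + (p.1 ^ 2 + p.2.2 ^ 2) * pyth
        - (p.1 * Real.sin φ - p.2.2 * Real.cos φ) * hplane
    · show p.1 * Real.sin (-φ) + p.2.2 * Real.cos (-φ) = 0
      rw [Real.cos_neg, Real.sin_neg]
      linarith [hplane]
    · simp only [rotY, Real.cos_neg, Real.sin_neg]
      refine Prod.ext ?_ (Prod.ext ?_ ?_)
      · show (p.1 * Real.cos φ - p.2.2 * -Real.sin φ) * Real.cos φ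
            - (p.1 * -Real.sin φ + p.2.2 * Real.cos φ) * Real.sin φ = p.1
        linear_combination p.1 * pyth
      · rfl
      · show (p.1 * Real.cos φ - p.2.2 * -Real.sin φ) * Real.sin φ
            + (p.1 * -Real.sin φ + p.2.2 * Real.cos φ) * Real.cos φ = p.2.2
        linear_combination p.2.2 * pyth
    · simp only [hp, invStereo, stereo]
      have h2 : 1 - (u ^ 2 + v ^ 2 - 1) / (u ^ 2 + v ^ 2 + 1) = 2 / (u ^ 2 + v ^ 2 + 1) := by
        field_simp; ring
      rw [h2]
      refine Prod.ext ?_ ?_ <;> · simp only; field_simp
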